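/- arXiv:1511.01031 — 3 statements merged into one kernel-verified Lean document; each statement's English description precedes it below -/
import Mathlib

section
/- Let L be a bounded distributive lattice. Then: (1) for every congruence φ of L, φ has the BLP if and only if φ has the FCLP; (2) L has the BLP if and only if L has the FCLP. -/
/-! Universal-algebra framework: algebras over a signature, congruences,
factor congruences, lifting properties. -/

structure Signature where
  ops : Type
  arity : ops → ℕ

structure Alg (σ : Signature) where
  carrier : Type
  interp : ∀ f : σ.ops, (Fin (σ.arity f) → carrier) → carrier

namespace Alg

variable {σ : Signature}

/-- A congruence: an equivalence relation compatible with all operations. -/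
def IsCon (A : Alg σ) (r : A.carrier → A.carrier → Prop) : Prop :=
  Equivalence r ∧
    ∀ (f : σ.ops) (x y : Fin (σ.arity f) → A.carrier),
      (∀ i, r (x i) (y i)) → r (A.interp f x) (A.interp f y)

/-- The least congruence `Δ_A`. -/
def delta (A : Alg σ) : A.carrier → A.carrier → Prop := fun a b => a = b

/-- The greatest congruence `∇_A = A²`. -/
def nabla (A : Alg σ) : A.carrier → A.carrier → Prop := fun _ _ => True

/-- Meet (intersection) of congruences. -/
def conMeet (A : Alg σ) (r s : A.carrier → A.carrier → Prop) :
    A.carrier → A.carrier → Prop := fun a b => r a b ∧ s a b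

/-- Join of congruences: the least congruence containing both. -/
def conJoin (A : Alg σ) (r s : A.carrier → A.carrier → Prop) :
    A.carrier → A.carrier → Prop := fun a b =>
  ∀ t, A.IsCon t → (∀ x y, r x y → t x y) → (∀ x y, s x y → t x y) → t a b

/-- The congruence generated by a set of pairs. -/
def conGen (A : Alg σ) (X : Set (A.carrier × A.carrier)) :
    A.carrier → A.carrier → Prop := fun a b =>
  ∀ t, A.IsCon t → (∀ p ∈ X, t p.1 p.2) → t a b

/-- Composition of relations: `(a,b) ∈ comp r s` iff `(a,x) ∈ s` and `(x,b) ∈ r`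
for some `x`. -/
def comp (A : Alg σ) (r s : A.carrier → A.carrier → Prop) :
    A.carrier → A.carrier → Prop := fun a b => ∃ x, s a x ∧ r x b

/-- Factor congruences: congruences `φ` having a congruence `φ*` with
`φ ∨ φ* = ∇`, `φ ∩ φ* = Δ` and `φ ∘ φ* = φ* ∘ φ`. -/
def IsFC (A : Alg σ) (φ : A.carrier → A.carrier → Prop) : Prop :=
  A.IsCon φ ∧ ∃ ψ, A.IsCon ψ ∧ A.conJoin φ ψ = A.nabla ∧
    A.conMeet φ ψ = A.delta ∧ A.comp φ ψ = A.comp ψ φ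

/-- Boolean congruences: complemented elements of the lattice `Con(A)`. -/
def IsBooleanCon (A : Alg σ) (φ : A.carrier → A.carrier → Prop) : Prop :=
  A.IsCon φ ∧ ∃ ψ, A.IsCon ψ ∧ A.conJoin φ ψ = A.nabla ∧ A.conMeet φ ψ = A.delta

/-- `A` is congruence-distributive iff the lattice `Con(A)` is distributive. -/
def CongDistrib (A : Alg σ) : Prop :=
  ∀ r s t, A.IsCon r → A.IsCon s → A.IsCon t →
    A.conMeet r (A.conJoin s t) = A.conJoin (A.conMeet r s) (A.conMeet r t)

/-- `A` is congruence-permutable iff all congruences permute under composition. -/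
def CongPermutable (A : Alg σ) : Prop :=
  ∀ r s, A.IsCon r → A.IsCon s → A.comp r s = A.comp s r

/-- Arithmetical = congruence-distributive + congruence-permutable. -/
def Arithmetical (A : Alg σ) : Prop := A.CongDistrib ∧ A.CongPermutable

/-- The quotient algebra `A/θ`. -/
noncomputable def quotAlg (A : Alg σ) (θ : A.carrier → A.carrier → Prop) :
    Alg σ where
  carrier := Quot θ
  interp f x := Quot.mk θ (A.interp f fun i => (x i).out)

/-- The image `α/θ = {(a/θ, b/θ) : (a,b) ∈ α}` of a relation in the quotient. -/
def quotRel (A : Alg σ) (θ α : A.carrier → A.carrier → Prop) :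
    Quot θ → Quot θ → Prop := fun x y =>
  ∃ a b, x = Quot.mk θ a ∧ y = Quot.mk θ b ∧ α a b

/-- `θ` has the Factor Congruence Lifting Property: the Boolean morphism
`FC(θ) : FC(A) → FC(A/θ)`, `ψ ↦ (ψ ∨ θ)/θ`, is surjective. -/
def HasFCLP (A : Alg σ) (θ : A.carrier → A.carrier → Prop) : Prop :=
  ∀ γ, (A.quotAlg θ).IsFC γ →
    ∃ ψ, A.IsFC ψ ∧ A.quotRel θ (A.conJoin ψ θ) = γ

/-- `θ` has the Congruence Boolean Lifting Property: the Boolean morphism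
`B(Con(A)) → B(Con(A/θ))`, `ψ ↦ (ψ ∨ θ)/θ`, is surjective. -/
def HasCBLP (A : Alg σ) (θ : A.carrier → A.carrier → Prop) : Prop :=
  ∀ γ, (A.quotAlg θ).IsBooleanCon γ →
    ∃ ψ, A.IsBooleanCon ψ ∧ A.quotRel θ (A.conJoin ψ θ) = γ

/-- `A` has FCLP iff every congruence of `A` has FCLP. -/
def AlgFCLP (A : Alg σ) : Prop := ∀ θ, A.IsCon θ → A.HasFCLP θ

/-- `A` has CBLP iff every congruence of `A` has CBLP. -/
def AlgCBLP (A : Alg σ) : Prop := ∀ θ, A.IsCon θ → A.HasCBLP θ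

/-- FC-normality. -/
def FCNormal (A : Alg σ) : Prop :=
  ∀ φ ψ, A.IsCon φ → A.IsCon ψ → A.comp φ ψ = A.nabla →
    ∃ α β, A.IsFC α ∧ A.IsFC β ∧ A.conMeet α β = A.delta ∧
      A.comp φ α = A.nabla ∧ A.comp ψ β = A.nabla

/-- B-normality. -/
def BNormal (A : Alg σ) : Prop :=
  ∀ φ ψ, A.IsCon φ → A.IsCon ψ → A.conJoin φ ψ = A.nabla →
    ∃ α β, A.IsBooleanCon α ∧ A.IsBooleanCon β ∧ A.conMeet α β = A.delta ∧
      A.conJoin φ α = A.nabla ∧ A.conJoin ψ β = A.nabla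

/-- Isomorphism of algebras. -/
def Iso (A B : Alg σ) : Prop :=
  ∃ e : A.carrier ≃ B.carrier,
    ∀ (f : σ.ops) (x : Fin (σ.arity f) → A.carrier),
      e (A.interp f x) = B.interp f fun i => e (x i)

/-- Direct product of a finite family of algebras. -/
def prodAlg {n : ℕ} (B : Fin n → Alg σ) : Alg σ where
  carrier := ∀ i, (B i).carrier
  interp f x := fun i => (B i).interp f fun j => x j i

/-- The product congruence `θ₁ × … × θₙ`. -/
def prodRel {n : ℕ} (B : Fin n → Alg σ)
    (θ : ∀ i, (B i).carrier → (B i).carrier → Prop) :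
    (prodAlg B).carrier → (prodAlg B).carrier → Prop :=
  fun x y => ∀ i, θ i (x i) (y i)

/-- Maximal congruences: maximal elements of `(Con(A) \ {∇}, ⊆)`. -/
def IsMaxCon (A : Alg σ) (θ : A.carrier → A.carrier → Prop) : Prop :=
  A.IsCon θ ∧ θ ≠ A.nabla ∧
    ∀ ψ, A.IsCon ψ → ψ ≠ A.nabla → (∀ a b, θ a b → ψ a b) → ψ = θ

/-- Prime congruences. -/
def IsPrimeCon (A : Alg σ) (θ : A.carrier → A.carrier → Prop) : Prop :=
  A.IsCon θ ∧ ∀ α β, A.IsCon α → A.IsCon β →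
    (∀ a b, α a b → β a b → θ a b) →
    (∀ a b, α a b → θ a b) ∨ ∀ a b, β a b → θ a b

end Alg

/-! The signature of bounded lattices, the Boolean center, and the BLP. -/

inductive LatOp | sup | inf | bot | top

abbrev latSig : Signature where
  ops := LatOp
  arity := fun f => match f with
    | .sup => 2 | .inf => 2 | .bot => 0 | .top => 0

/-- The algebra over `latSig` attached to a bounded lattice. -/
def latAlg (L : Type) [Lattice L] [BoundedOrder L] : Alg latSig where
  carrier := L
  interp := fun f => match f with
    | .sup => fun x => x 0 ⊔ x 1
    | .inf => fun x => x 0 ⊓ x 1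
    | .bot => fun _ => ⊥
    | .top => fun _ => ⊤

/-- A complemented element of an algebra over the bounded-lattice signature
(an element of the Boolean center). -/
def ComplementedElem (A : Alg latSig) (x : A.carrier) : Prop :=
  ∃ y, A.interp .inf ![x, y] = A.interp .bot ![] ∧
       A.interp .sup ![x, y] = A.interp .top ![]

/-- A congruence `θ` of a bounded lattice `L` has the Boolean Lifting Property
iff the Boolean morphism `B(L) → B(L/θ)`, `a ↦ a/θ`, is surjective. -/
def HasBLP (L : Type) [Lattice L] [BoundedOrder L] (θ : L → L → Prop) : Prop :=
  ∀ q : ((latAlg L).quotAlg θ).carrier,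
    ComplementedElem ((latAlg L).quotAlg θ) q →
    ∃ a : L, ComplementedElem (latAlg L) a ∧ Quot.mk θ a = q

section AuxTheta

open Alg

variable {M : Type} [Lattice M] [BoundedOrder M]

lemma con_sup {r : M → M → Prop} (h : (latAlg M).IsCon r) {a b c d : M}
    (h1 : r a b) (h2 : r c d) : r (a ⊔ c) (b ⊔ d) :=
  h.2 .sup ![a, c] ![b, d] (fun i => by fin_cases i <;> assumption)

lemma con_inf {r : M → M → Prop} (h : (latAlg M).IsCon r) {a b c d : M}
    (h1 : r a b) (h2 : r c d) : r (a ⊓ c) (b ⊓ d) :=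
  h.2 .inf ![a, c] ![b, d] (fun i => by fin_cases i <;> assumption)

/-- The factor congruence attached to an element `a`. -/
def thetaRel (M : Type) [Lattice M] (a : M) : M → M → Prop :=
  fun x y => x ⊔ a = y ⊔ a

lemma compl_iff (x : M) :
    ComplementedElem (latAlg M) x ↔ ∃ y, x ⊓ y = ⊥ ∧ x ⊔ y = ⊤ := Iff.rfl

end AuxTheta

section AuxThetaD

open Alg

variable {M : Type} [DistribLattice M] [BoundedOrder M]

lemma theta_isCon (a : M) : (latAlg M).IsCon (thetaRel M a) := by
  constructor
  · exact ⟨fun x => rfl, fun h => h.symm, fun h1 h2 => h1.trans h2⟩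
  · intro f x y h
    cases f with
    | sup =>
      have key : ∀ x0 x1 y0 y1 : M, x0 ⊔ a = y0 ⊔ a → x1 ⊔ a = y1 ⊔ a →
          (x0 ⊔ x1) ⊔ a = (y0 ⊔ y1) ⊔ a := by
        intro x0 x1 y0 y1 h0 h1
        rw [sup_sup_distrib_right, h0, h1, ← sup_sup_distrib_right]
      exact key (x 0) (x 1) (y 0) (y 1) (h 0) (h 1)
    | inf =>
      have key : ∀ x0 x1 y0 y1 : M, x0 ⊔ a = y0 ⊔ a → x1 ⊔ a = y1 ⊔ a →
          (x0 ⊓ x1) ⊔ a = (y0 ⊓ y1) ⊔ a := by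
        intro x0 x1 y0 y1 h0 h1
        rw [sup_inf_right, h0, h1, ← sup_inf_right]
      exact key (x 0) (x 1) (y 0) (y 1) (h 0) (h 1)
    | bot => rfl
    | top => rfl

lemma mid_sup {c d : M} (h : d ⊔ c = ⊤) (x y : M) :
    ((x ⊔ c) ⊓ (y ⊔ d)) ⊔ c = x ⊔ c := by
  rw [sup_inf_right, sup_assoc, sup_assoc, sup_idem, h, sup_top_eq, inf_top_eq]

end AuxThetaD

section AuxFC

open Alg

variable {M : Type} [DistribLattice M] [BoundedOrder M]

lemma rel_apply {α : Type} {r s : α → α → Prop} (h : r = s) {x y : α} :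
    r x y ↔ s x y := by rw [h]

lemma rel_ext {α : Type} {r s : α → α → Prop} (h : ∀ x y : α, r x y ↔ s x y) :
    r = s := funext fun x => funext fun y => propext (h x y)

lemma shift_isCon {φ : M → M → Prop} (hφ : (latAlg M).IsCon φ) (a : M) :
    (latAlg M).IsCon (fun x y => φ (x ⊔ a) (y ⊔ a)) := by
  constructor
  · exact ⟨fun x => hφ.1.refl _, fun h => hφ.1.symm h, fun h1 h2 => hφ.1.trans h1 h2⟩
  · intro f x y h
    cases f with
    | sup =>
      have key : ∀ x0 x1 y0 y1 : M, φ (x0 ⊔ a) (y0 ⊔ a) → φ (x1 ⊔ a) (y1 ⊔ a) →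
          φ ((x0 ⊔ x1) ⊔ a) ((y0 ⊔ y1) ⊔ a) := by
        intro x0 x1 y0 y1 h0 h1
        rw [sup_sup_distrib_right x0 x1 a, sup_sup_distrib_right y0 y1 a]
        exact con_sup hφ h0 h1
      exact key (x 0) (x 1) (y 0) (y 1) (h 0) (h 1)
    | inf =>
      have key : ∀ x0 x1 y0 y1 : M, φ (x0 ⊔ a) (y0 ⊔ a) → φ (x1 ⊔ a) (y1 ⊔ a) →
          φ ((x0 ⊓ x1) ⊔ a) ((y0 ⊓ y1) ⊔ a) := by
        intro x0 x1 y0 y1 h0 h1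
        rw [sup_inf_right x0 x1 a, sup_inf_right y0 y1 a]
        exact con_inf hφ h0 h1
      exact key (x 0) (x 1) (y 0) (y 1) (h 0) (h 1)
    | bot => exact hφ.1.refl _
    | top => exact hφ.1.refl _

lemma theta_isFC {a b : M} (hab : a ⊓ b = ⊥) (hab2 : a ⊔ b = ⊤) :
    (latAlg M).IsFC (thetaRel M a) := by
  have hba2 : b ⊔ a = ⊤ := by rw [sup_comm]; exact hab2
  refine ⟨theta_isCon a, thetaRel M b, theta_isCon b, ?_, ?_, ?_⟩
  · refine rel_ext (fun x y : M => ?_)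
    constructor
    · intro _; trivial
    · intro _ t ht hta htb
      have h1 : thetaRel M a x ((x ⊔ a) ⊓ (y ⊔ b)) := (mid_sup hba2 x y).symm
      have h2 : thetaRel M b ((x ⊔ a) ⊓ (y ⊔ b)) y := by
        show ((x ⊔ a) ⊓ (y ⊔ b)) ⊔ b = y ⊔ b
        rw [inf_comm]
        exact mid_sup hab2 y x
      exact ht.1.trans (hta _ _ h1) (htb _ _ h2)
  · refine rel_ext (fun x y : M => ?_)
    constructor
    · intro hm
      have h1 : x ⊔ a = y ⊔ a := hm.1
      have h2 : x ⊔ b = y ⊔ b := hm.2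
      show x = y
      have h3 : x ⊔ a ⊓ b = y ⊔ a ⊓ b := by rw [sup_inf_left, sup_inf_left, h1, h2]
      rwa [hab, sup_bot_eq, sup_bot_eq] at h3
    · intro h
      have h' : x = y := h
      subst h'
      exact ⟨rfl, rfl⟩
  · refine rel_ext (fun x y : M => ?_)
    constructor
    · intro _
      refine ⟨((x ⊔ a) ⊓ (y ⊔ b) : M), (mid_sup hba2 x y).symm, ?_⟩
      show ((x ⊔ a) ⊓ (y ⊔ b)) ⊔ b = y ⊔ b
      rw [inf_comm]
      exact mid_sup hab2 y x
    · intro _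
      refine ⟨((x ⊔ b) ⊓ (y ⊔ a) : M), (mid_sup hab2 x y).symm, ?_⟩
      show ((x ⊔ b) ⊓ (y ⊔ a)) ⊔ a = y ⊔ a
      rw [inf_comm]
      exact mid_sup hba2 y x

lemma conJoin_theta (a : M) {φ : M → M → Prop} (hφ : (latAlg M).IsCon φ) :
    (latAlg M).conJoin (thetaRel M a) φ = fun x y => φ (x ⊔ a) (y ⊔ a) := by
  refine rel_ext (fun x y : M => ?_)
  have hkey : ∀ u v : M, u ⊔ a = v ⊔ a → φ (u ⊔ a) (v ⊔ a) := by
    intro u v h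
    rw [h]
    exact hφ.1.refl _
  have hstep : ∀ u : M, u ⊔ a = (u ⊔ a) ⊔ a := by
    intro u
    rw [sup_assoc, sup_idem]
  constructor
  · intro h
    refine h _ (shift_isCon hφ a) ?_ ?_
    · exact fun u v huv => hkey u v huv
    · exact fun u v huv => con_sup hφ huv (hφ.1.refl a)
  · intro h t ht hta htφ
    have e1 : t x ((x ⊔ a : M)) := hta _ _ (hstep x)
    have e2 : t ((x ⊔ a : M)) ((y ⊔ a : M)) := htφ _ _ h
    have e3 : t ((y ⊔ a : M)) y := ht.1.symm (hta _ _ (hstep y))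
    exact ht.1.trans e1 (ht.1.trans e2 e3)

lemma isFC_theta {ψ : M → M → Prop} (h : (latAlg M).IsFC ψ) :
    ∃ a b : M, a ⊓ b = ⊥ ∧ a ⊔ b = ⊤ ∧ ψ = thetaRel M a := by
  obtain ⟨hψ, ψ'0, hψ'0, hjoin0, hmeet0, hcomp0⟩ := h
  obtain ⟨ψ', hψ', hjoin, hmeet, hcomp⟩ :
      ∃ ρ : M → M → Prop, (latAlg M).IsCon ρ ∧
        (latAlg M).conJoin ψ ρ = (latAlg M).nabla ∧
        (latAlg M).conMeet ψ ρ = (latAlg M).delta ∧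
        (latAlg M).comp ψ ρ = (latAlg M).comp ρ ψ :=
    ⟨ψ'0, hψ'0, hjoin0, hmeet0, hcomp0⟩
  have hdelta : ∀ x y : M, ψ x y → ψ' x y → x = y := by
    intro x y h1 h2
    have e := congrFun (congrFun hmeet x) y
    exact Eq.mp e ⟨h1, h2⟩
  have hsymm : ∀ x y, (latAlg M).comp ψ ψ' x y → (latAlg M).comp ψ ψ' y x := by
    intro x y hc
    obtain ⟨z, h1, h2⟩ := hc
    exact (rel_apply hcomp).mpr ⟨z, hψ.1.symm h2, hψ'.1.symm h1⟩
  have htrans : ∀ x y z, (latAlg M).comp ψ ψ' x y → (latAlg M).comp ψ ψ' y z →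
      (latAlg M).comp ψ ψ' x z := by
    intro x y z h1 h2
    obtain ⟨u, hu1, hu2⟩ := h1
    obtain ⟨v, hv1, hv2⟩ := h2
    have huv : (latAlg M).comp ψ ψ' u v := (rel_apply hcomp).mpr ⟨y, hu2, hv1⟩
    obtain ⟨w, hw1, hw2⟩ := huv
    exact ⟨w, hψ'.1.trans hu1 hw1, hψ.1.trans hw2 hv2⟩
  have hcon : (latAlg M).IsCon ((latAlg M).comp ψ ψ') := by
    refine ⟨⟨fun x => ⟨x, hψ'.1.refl x, hψ.1.refl x⟩,
      fun h => hsymm _ _ h, fun h1 h2 => htrans _ _ _ h1 h2⟩, ?_⟩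
    intro f x y hxy
    have hxy' : ∀ i, ∃ z, ψ' (x i) z ∧ ψ z (y i) := hxy
    choose z hz1 hz2 using hxy'
    exact ⟨(latAlg M).interp f z, hψ'.2 f x z hz1, hψ.2 f z y hz2⟩
  have hall : ∀ x y : M, (latAlg M).comp ψ ψ' x y := by
    intro x y
    have hj : (latAlg M).conJoin ψ ψ' x y := by rw [hjoin]; trivial
    exact hj _ hcon (fun u v h => ⟨u, hψ'.1.refl u, h⟩) (fun u v h => ⟨v, h, hψ.1.refl v⟩)
  obtain ⟨a, ha1, ha2⟩ : ∃ z : M, ψ' (⊥:M) z ∧ ψ z (⊤:M) := hall ⊥ ⊤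
  obtain ⟨b, hb1, hb2⟩ : ∃ z : M, ψ (⊥:M) z ∧ ψ' z (⊤:M) := (rel_apply hcomp).mp (hall ⊥ ⊤)
  have hab : a ⊓ b = ⊥ := by
    have k1 : ψ ⊥ (a ⊓ b) := by
      have k := con_inf hψ (hψ.1.refl a) hb1
      rwa [inf_bot_eq] at k
    have k2 : ψ' ⊥ (a ⊓ b) := by
      have k := con_inf hψ' ha1 (hψ'.1.refl b)
      rwa [bot_inf_eq] at k
    exact (hdelta _ _ k1 k2).symm
  have hab2 : a ⊔ b = ⊤ := by
    have k1 : ψ (a ⊔ b) ⊤ := by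
      have k := con_sup hψ ha2 (hψ.1.refl b)
      rwa [top_sup_eq] at k
    have k2 : ψ' (a ⊔ b) ⊤ := by
      have k := con_sup hψ' (hψ'.1.refl a) hb2
      rwa [sup_top_eq] at k
    exact hdelta _ _ k1 k2
  refine ⟨b, a, by rw [inf_comm]; exact hab, by rw [sup_comm]; exact hab2, ?_⟩
  refine rel_ext (fun x y : M => ?_)
  constructor
  · intro hxy
    have h3 : ψ (x ⊓ a) (y ⊓ a) := con_inf hψ hxy (hψ.1.refl a)
    have k1 : ψ' ⊥ (x ⊓ a) := by
      have k := con_inf hψ' (hψ'.1.refl x) ha1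
      rwa [inf_bot_eq] at k
    have k2 : ψ' ⊥ (y ⊓ a) := by
      have k := con_inf hψ' (hψ'.1.refl y) ha1
      rwa [inf_bot_eq] at k
    have h4 : ψ' (x ⊓ a) (y ⊓ a) := hψ'.1.trans (hψ'.1.symm k1) k2
    have h5 : x ⊓ a = y ⊓ a := hdelta _ _ h3 h4
    show x ⊔ b = y ⊔ b
    have e : ∀ z : M, z ⊔ b = (z ⊓ a) ⊔ b := by
      intro z
      rw [sup_inf_right, hab2, inf_top_eq]
    rw [e x, e y, h5]
  · intro hxy
    have hxy' : x ⊔ b = y ⊔ b := hxy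
    have h1 : ψ x (x ⊔ b) := by
      have k := con_sup hψ (hψ.1.refl x) hb1
      rwa [sup_bot_eq] at k
    have h2 : ψ y (y ⊔ b) := by
      have k := con_sup hψ (hψ.1.refl y) hb1
      rwa [sup_bot_eq] at k
    have h2' : ψ (x ⊔ b) y := by rw [hxy']; exact hψ.1.symm h2
    exact hψ.1.trans h1 h2'

end AuxFC

section AuxQuot

open Alg

lemma mk_eq' {α : Type} {φ : α → α → Prop} (h : Equivalence φ) {a b : α} :
    Quot.mk φ a = Quot.mk φ b ↔ φ a b :=
  Quot.eq.trans h.eqvGen_iff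

lemma out_mk' {α : Type} {φ : α → α → Prop} (h : Equivalence φ) (a : α) :
    φ (Quot.mk φ a).out a :=
  (mk_eq' h).mp (Quot.out_eq _)

/-- The quotient bounded distributive lattice. -/
noncomputable def quotDL (L : Type) [DistribLattice L] [BoundedOrder L]
    (φ : L → L → Prop) (hφ : (latAlg L).IsCon φ) : DistribLattice (Quot φ) :=
  letI : Max (Quot φ) := ⟨fun q r => Quot.mk φ (q.out ⊔ r.out)⟩
  letI : Min (Quot φ) := ⟨fun q r => Quot.mk φ (q.out ⊓ r.out)⟩
  have hs : ∀ a b : L, (Quot.mk φ a ⊔ Quot.mk φ b) = Quot.mk φ (a ⊔ b) := fun a b =>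
    (mk_eq' hφ.1).mpr (con_sup hφ (out_mk' hφ.1 a) (out_mk' hφ.1 b))
  have hi : ∀ a b : L, (Quot.mk φ a ⊓ Quot.mk φ b) = Quot.mk φ (a ⊓ b) := fun a b =>
    (mk_eq' hφ.1).mpr (con_inf hφ (out_mk' hφ.1 a) (out_mk' hφ.1 b))
  letI lat : Lattice (Quot φ) := Lattice.mk'
    (fun q r => by
      induction q using Quot.ind
      induction r using Quot.ind
      rw [hs, hs, sup_comm])
    (fun q r s => by
      induction q using Quot.ind
      induction r using Quot.ind
      induction s using Quot.ind
      rw [hs, hs, hs, hs, sup_assoc])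
    (fun q r => by
      induction q using Quot.ind
      induction r using Quot.ind
      rw [hi, hi, inf_comm])
    (fun q r s => by
      induction q using Quot.ind
      induction r using Quot.ind
      induction s using Quot.ind
      rw [hi, hi, hi, hi, inf_assoc])
    (fun q r => by
      induction q using Quot.ind
      induction r using Quot.ind
      rw [hi, hs, sup_inf_self])
    (fun q r => by
      induction q using Quot.ind
      induction r using Quot.ind
      rw [hs, hi, inf_sup_self])
  DistribLattice.ofInfSupLe (fun q r s => by
    induction q using Quot.ind
    induction r using Quot.ind
    induction s using Quot.ind
    rw [hs, hi, hi, hi, hs, inf_sup_left])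

/-- The quotient bounded order. -/
noncomputable def quotBO (L : Type) [DistribLattice L] [BoundedOrder L]
    (φ : L → L → Prop) (hφ : (latAlg L).IsCon φ) :
    letI := quotDL L φ hφ
    BoundedOrder (Quot φ) :=
  letI := quotDL L φ hφ
  have hs : ∀ a b : L, (Quot.mk φ a ⊔ Quot.mk φ b) = Quot.mk φ (a ⊔ b) := fun a b =>
    (mk_eq' hφ.1).mpr (con_sup hφ (out_mk' hφ.1 a) (out_mk' hφ.1 b))
  { top := Quot.mk φ ⊤
    le_top := fun q => by
      induction q using Quot.ind
      rename_i a
      exact sup_eq_right.mp ((hs a ⊤).trans (congrArg (Quot.mk φ) (sup_top_eq a)))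
    bot := Quot.mk φ ⊥
    bot_le := fun q => by
      induction q using Quot.ind
      rename_i a
      exact sup_eq_right.mp ((hs ⊥ a).trans (congrArg (Quot.mk φ) (bot_sup_eq a))) }

end AuxQuot

section AuxMain

open Alg

lemma main_aux (L : Type) [DistribLattice L] [BoundedOrder L] (φ : L → L → Prop)
    (hφ : (latAlg L).IsCon φ) : HasBLP L φ ↔ (latAlg L).HasFCLP φ := by
  letI dl : DistribLattice (Quot φ) := quotDL L φ hφ
  letI bo : BoundedOrder (Quot φ) := quotBO L φ hφ
  have hint : ∀ (f : latSig.ops) (x : Fin (latSig.arity f) → Quot φ),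
      ((latAlg L).quotAlg φ).interp f x = (latAlg (Quot φ)).interp f x := by
    intro f x
    cases f <;> rfl
  have hIsCon : ∀ t : Quot φ → Quot φ → Prop,
      ((latAlg L).quotAlg φ).IsCon t ↔ (latAlg (Quot φ)).IsCon t := by
    intro t
    constructor
    · intro h
      refine ⟨h.1, ?_⟩
      intro f x y hxy
      have e := h.2 f x y hxy
      rwa [hint f x, hint f y] at e
    · intro h
      refine ⟨h.1, ?_⟩
      intro f x y hxy
      have e := h.2 f x y hxy
      rwa [← hint f x, ← hint f y] at e
  have hconJoin : ∀ r s : Quot φ → Quot φ → Prop,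
      ((latAlg L).quotAlg φ).conJoin r s = (latAlg (Quot φ)).conJoin r s := by
    intro r s
    refine rel_ext (fun x y => ?_)
    constructor
    · intro h t ht h1 h2
      exact h t ((hIsCon t).mpr ht) h1 h2
    · intro h t ht h1 h2
      exact h t ((hIsCon t).mp ht) h1 h2
  have hIsFC : ∀ γ : Quot φ → Quot φ → Prop,
      ((latAlg L).quotAlg φ).IsFC γ ↔ (latAlg (Quot φ)).IsFC γ := by
    intro γ
    constructor
    · rintro ⟨h1, ψ, h2, h3, h4, h5⟩
      exact ⟨(hIsCon γ).mp h1, ψ, (hIsCon ψ).mp h2,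
        (hconJoin γ ψ).symm.trans h3, h4, h5⟩
    · rintro ⟨h1, ψ, h2, h3, h4, h5⟩
      exact ⟨(hIsCon γ).mpr h1, ψ, (hIsCon ψ).mpr h2,
        (hconJoin γ ψ).trans h3, h4, h5⟩
  have hCompl : ∀ q : Quot φ, ComplementedElem ((latAlg L).quotAlg φ) q ↔
      ∃ r : Quot φ, q ⊓ r = ⊥ ∧ q ⊔ r = ⊤ := by
    intro q
    constructor
    · rintro ⟨r, h1, h2⟩
      have h1 := (hint .inf ![q, r]).symm.trans (h1.trans (hint .bot ![]))
      have h2 := (hint .sup ![q, r]).symm.trans (h2.trans (hint .top ![]))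
      exact ⟨r, h1, h2⟩
    · rintro ⟨r, h1, h2⟩
      refine ⟨r, ?_, ?_⟩
      · exact (hint .inf ![q, r]).trans (h1.trans (hint .bot ![]).symm)
      · exact (hint .sup ![q, r]).trans (h2.trans (hint .top ![]).symm)
  have hs : ∀ a b : L, (Quot.mk φ a ⊔ Quot.mk φ b) = Quot.mk φ (a ⊔ b) := fun a b =>
    (mk_eq' hφ.1).mpr (con_sup hφ (out_mk' hφ.1 a) (out_mk' hφ.1 b))
  have hquot : ∀ a : L,
      (latAlg L).quotRel φ ((latAlg L).conJoin (thetaRel L a) φ)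
        = thetaRel (Quot φ) (Quot.mk φ a) := by
    intro a
    rw [conJoin_theta a hφ]
    refine rel_ext (fun u v : Quot φ => ?_)
    constructor
    · rintro ⟨x, y, rfl, rfl, hxy⟩
      show Quot.mk φ x ⊔ Quot.mk φ a = Quot.mk φ y ⊔ Quot.mk φ a
      exact (hs x a).trans (((mk_eq' hφ.1).mpr hxy).trans (hs y a).symm)
    · intro h
      refine ⟨u.out, v.out, (Quot.out_eq u).symm, (Quot.out_eq v).symm, ?_⟩
      have h' : u ⊔ Quot.mk φ a = v ⊔ Quot.mk φ a := h
      rw [← Quot.out_eq u, ← Quot.out_eq v, hs, hs] at h'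
      exact (mk_eq' hφ.1).mp h'
  constructor
  · intro hblp γ hγ
    obtain ⟨q, r, hqr1, hqr2, rfl⟩ := isFC_theta ((hIsFC γ).mp hγ)
    obtain ⟨a, ha, haq⟩ := hblp q ((hCompl q).mpr ⟨r, hqr1, hqr2⟩)
    obtain ⟨b, hab1, hab2⟩ := ha
    refine ⟨thetaRel L a, theta_isFC hab1 hab2, ?_⟩
    rw [hquot a, haq]
  · intro hf q hq
    obtain ⟨q', rfl⟩ : ∃ q' : Quot φ, q' = q := ⟨q, rfl⟩
    rename' q' => q
    obtain ⟨r, hr1, hr2⟩ := (hCompl q).mp hq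
    obtain ⟨ψ, hψFC, hψlift⟩ := hf (thetaRel (Quot φ) q)
      ((hIsFC (thetaRel (Quot φ) q)).mpr (theta_isFC hr1 hr2))
    obtain ⟨a, b, hab1, hab2, rfl⟩ := isFC_theta hψFC
    have hlift : thetaRel (Quot φ) (Quot.mk φ a) = thetaRel (Quot φ) q := by
      rw [← hquot a]
      exact hψlift
    have h1 : Quot.mk φ a ≤ q := by
      have e : thetaRel (Quot φ) q (Quot.mk φ a) ⊥ := by
        rw [← hlift]
        show Quot.mk φ a ⊔ Quot.mk φ a = ⊥ ⊔ Quot.mk φ a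
        rw [sup_idem, bot_sup_eq]
      have e' : Quot.mk φ a ⊔ q = (⊥ : Quot φ) ⊔ q := e
      rw [bot_sup_eq] at e'
      exact sup_eq_right.mp e'
    have h2 : q ≤ Quot.mk φ a := by
      have e : thetaRel (Quot φ) (Quot.mk φ a) q ⊥ := by
        rw [hlift]
        show q ⊔ q = ⊥ ⊔ q
        rw [sup_idem, bot_sup_eq]
      have e' : q ⊔ Quot.mk φ a = (⊥ : Quot φ) ⊔ Quot.mk φ a := e
      rw [bot_sup_eq] at e'
      exact sup_eq_right.mp e'
    exact ⟨a, ⟨b, hab1, hab2⟩, le_antisymm h1 h2⟩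

end AuxMain


/-- In a bounded distributive lattice, BLP coincides with FCLP, both for
individual congruences and for the lattice itself. -/
theorem stmt_13 (L : Type) [DistribLattice L] [BoundedOrder L] :
    (∀ φ, (latAlg L).IsCon φ → (HasBLP L φ ↔ (latAlg L).HasFCLP φ)) ∧
    ((∀ φ, (latAlg L).IsCon φ → HasBLP L φ) ↔ (latAlg L).AlgFCLP) := by
  
  refine ⟨fun φ hφ => main_aux L φ hφ, ?_, ?_⟩
  · intro h θ hθ
    exact (main_aux L θ hθ).mp (h θ hθ)
  · intro h θ hθ
    exact (main_aux L θ hθ).mpr (h θ hθ)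
end

section
/- Let A be a congruence-distributive algebra. Then every prime congruence of A has both the FCLP and the CBLP. -/
namespace Alg

variable {σ : Signature}

theorem isCon_delta' (A : Alg σ) : A.IsCon A.delta :=
  ⟨⟨fun _ => rfl, fun h => h.symm, fun h h' => h.trans h'⟩,
   fun f x y h => by
     have hxy : x = y := funext h
     rw [hxy]
     rfl⟩

theorem isCon_nabla' (A : Alg σ) : A.IsCon A.nabla :=
  ⟨⟨fun _ => trivial, @fun _ _ _ => trivial, @fun _ _ _ _ _ => trivial⟩,
   fun _ _ _ _ => trivial⟩

theorem comp_delta_nabla (A : Alg σ) :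
    A.comp A.delta A.nabla = A.comp A.nabla A.delta := by
  funext a b
  apply propext
  constructor
  · rintro ⟨x, -, -⟩; exact ⟨a, rfl, trivial⟩
  · rintro ⟨x, -, -⟩; exact ⟨b, trivial, rfl⟩

theorem isFC_delta' (A : Alg σ) : A.IsFC A.delta := by
  refine ⟨A.isCon_delta', A.nabla, A.isCon_nabla', ?_, ?_, A.comp_delta_nabla⟩
  · funext a b
    apply propext
    exact ⟨fun _ => trivial, fun _ t _ _ hn => hn a b trivial⟩
  · funext a b
    apply propext
    exact ⟨fun h => h.1, fun h => ⟨h, trivial⟩⟩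

theorem isFC_nabla' (A : Alg σ) : A.IsFC A.nabla := by
  refine ⟨A.isCon_nabla', A.delta, A.isCon_delta', ?_, ?_, A.comp_delta_nabla.symm⟩
  · funext a b
    apply propext
    exact ⟨fun _ => trivial, fun _ t _ hn _ => hn a b trivial⟩
  · funext a b
    apply propext
    exact ⟨fun h => h.2, fun h => ⟨trivial, h⟩⟩

theorem conJoin_delta (A : Alg σ) (θ : A.carrier → A.carrier → Prop)
    (hθ : A.IsCon θ) : A.conJoin A.delta θ = θ := by
  funext a b
  apply propext
  constructor
  · intro h
    exact h θ hθ (fun x y hxy => hxy ▸ hθ.1.refl x) (fun _ _ h => h)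
  · intro h t _ _ hsub
    exact hsub a b h

theorem conJoin_nabla (A : Alg σ) (θ : A.carrier → A.carrier → Prop) :
    A.conJoin A.nabla θ = A.nabla := by
  funext a b
  apply propext
  exact ⟨fun _ => trivial, fun _ t _ hn _ => hn a b trivial⟩

theorem prime_key {σ : Signature} (A : Alg σ)
    (θ : A.carrier → A.carrier → Prop) (hθ : A.IsPrimeCon θ)
    (γ : Quot θ → Quot θ → Prop) (hγ : (A.quotAlg θ).IsBooleanCon γ) :
    ∃ ψ, A.IsFC ψ ∧ A.quotRel θ (A.conJoin ψ θ) = γ := by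
  obtain ⟨hγcon, δ, hδcon, hjoin, hmeet⟩ := hγ
  have mk_eq : ∀ a b : A.carrier, Quot.mk θ a = Quot.mk θ b → θ a b := by
    intro a b h
    exact (hθ.1.1.eqvGen_iff).1 (Quot.eq.1 h)
  have hmkinterp : ∀ (f : σ.ops) (x : Fin (σ.arity f) → A.carrier),
      Quot.mk θ (A.interp f x)
        = (A.quotAlg θ).interp f (fun i => Quot.mk θ (x i)) := by
    intro f x
    show Quot.mk θ (A.interp f x)
        = Quot.mk θ (A.interp f fun i => (Quot.mk θ (x i)).out)
    apply Quot.sound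
    exact hθ.1.2 f x _ (fun i => mk_eq _ _ (Quot.out_eq _).symm)
  -- pull back γ and δ
  set α : A.carrier → A.carrier → Prop :=
    fun a b => γ (Quot.mk θ a) (Quot.mk θ b) with hα
  set β : A.carrier → A.carrier → Prop :=
    fun a b => δ (Quot.mk θ a) (Quot.mk θ b) with hβ
  have hαcon : A.IsCon α := by
    refine ⟨⟨fun a => hγcon.1.refl _, @fun _ _ h => hγcon.1.symm h,
      @fun _ _ _ h h' => hγcon.1.trans h h'⟩, ?_⟩
    intro f x y h
    show γ (Quot.mk θ (A.interp f x)) (Quot.mk θ (A.interp f y))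
    rw [hmkinterp f x, hmkinterp f y]
    exact hγcon.2 f _ _ h
  have hβcon : A.IsCon β := by
    refine ⟨⟨fun a => hδcon.1.refl _, @fun _ _ h => hδcon.1.symm h,
      @fun _ _ _ h h' => hδcon.1.trans h h'⟩, ?_⟩
    intro f x y h
    show δ (Quot.mk θ (A.interp f x)) (Quot.mk θ (A.interp f y))
    rw [hmkinterp f x, hmkinterp f y]
    exact hδcon.2 f _ _ h
  have hsubθ : ∀ a b, α a b → β a b → θ a b := by
    intro a b ha hb
    have : (A.quotAlg θ).conMeet γ δ (Quot.mk θ a) (Quot.mk θ b) := ⟨ha, hb⟩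
    rw [hmeet] at this
    exact mk_eq a b this
  rcases hθ.2 α β hαcon hβcon hsubθ with hcase | hcase
  · -- γ = Δ on quotient; lift by Δ_A
    refine ⟨A.delta, A.isFC_delta', ?_⟩
    rw [A.conJoin_delta θ hθ.1]
    funext x y
    apply propext
    constructor
    · rintro ⟨a, b, rfl, rfl, hab⟩
      have : Quot.mk θ a = Quot.mk θ b := Quot.sound hab
      rw [this]
      exact hγcon.1.refl _
    · intro h
      refine ⟨x.out, y.out, (Quot.out_eq x).symm, (Quot.out_eq y).symm, ?_⟩
      apply hcase
      show γ (Quot.mk θ x.out) (Quot.mk θ y.out)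
      rw [Quot.out_eq, Quot.out_eq]
      exact h
  · -- γ = ∇ on quotient; lift by ∇_A
    have hγall : ∀ x y, γ x y := by
      intro x y
      have hjxy : (A.quotAlg θ).conJoin γ δ x y := by rw [hjoin]; trivial
      refine hjxy γ hγcon (fun _ _ h => h) ?_
      intro u v huv
      have hθuv : θ u.out v.out := by
        apply hcase
        show δ (Quot.mk θ u.out) (Quot.mk θ v.out)
        have hu : Quot.mk θ (Quot.out (u : Quot θ)) = u := Quot.out_eq _
        have hv : Quot.mk θ (Quot.out (v : Quot θ)) = v := Quot.out_eq _
        have huv' := huv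
        rw [← hu, ← hv] at huv'
        exact huv'
      have : u = v := by
        rw [← Quot.out_eq u, ← Quot.out_eq v]; exact Quot.sound hθuv
      rw [this]
      exact hγcon.1.refl _
    refine ⟨A.nabla, A.isFC_nabla', ?_⟩
    rw [A.conJoin_nabla θ]
    funext x y
    apply propext
    constructor
    · rintro ⟨a, b, rfl, rfl, -⟩; exact hγall _ _
    · intro _
      exact ⟨x.out, y.out, (Quot.out_eq x).symm, (Quot.out_eq y).symm, trivial⟩

theorem isFC_isBooleanCon {A : Alg σ} {ψ : A.carrier → A.carrier → Prop}
    (h : A.IsFC ψ) : A.IsBooleanCon ψ := by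
  obtain ⟨h1, χ, h2, h3, h4, _⟩ := h
  exact ⟨h1, χ, h2, h3, h4⟩

end Alg

/-- Every prime congruence of a congruence-distributive algebra has both
the FCLP and the CBLP. -/
theorem stmt_15 {σ : Signature} (A : Alg σ) (hne : Nonempty A.carrier)
    (hcd : A.CongDistrib) (θ : A.carrier → A.carrier → Prop)
    (hθ : A.IsPrimeCon θ) : A.HasFCLP θ ∧ A.HasCBLP θ := by
  constructor
  · intro γ hγ
    exact A.prime_key θ hθ γ (Alg.isFC_isBooleanCon hγ)
  · intro γ hγ
    obtain ⟨ψ, hψ, hq⟩ := A.prime_key θ hθ γ hγ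
    exact ⟨ψ, Alg.isFC_isBooleanCon hψ, hq⟩
end

section
/- Let A be a congruence-distributive algebra which is local (i.e., A has exactly one maximal congruence) and such that ∇_A is a finitely generated congruence of A. Then A has the FCLP and the CBLP. -/
namespace Alg

variable {σ : Signature} {A : Alg σ}

theorem mk_eq {θ : A.carrier → A.carrier → Prop} (hθ : A.IsCon θ)
    {a b : A.carrier} : Quot.mk θ a = Quot.mk θ b ↔ θ a b :=
  ⟨fun h => hθ.1.eqvGen_iff.mp (Quot.eqvGen_exact h), Quot.sound⟩

theorem con_delta : A.IsCon A.delta :=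
  ⟨⟨fun _ => rfl, fun h => h.symm, fun h1 h2 => h1.trans h2⟩,
   fun f x y h => by have : x = y := funext h; rw [this]; exact rfl⟩

theorem con_nabla : A.IsCon A.nabla :=
  ⟨⟨fun _ => trivial, fun _ => trivial, fun _ _ => trivial⟩, fun _ _ _ _ => trivial⟩

theorem nabla_iff {r : A.carrier → A.carrier → Prop} :
    r = A.nabla ↔ ∀ a b, r a b := by
  constructor
  · intro h a b; rw [h]; trivial
  · intro h; funext a b; exact propext ⟨fun _ => trivial, fun _ => h a b⟩

theorem proper_iff {X : Set (A.carrier × A.carrier)} (hX : A.conGen X = A.nabla)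
    {t : A.carrier → A.carrier → Prop} (ht : A.IsCon t) :
    t ≠ A.nabla ↔ ∃ p ∈ X, ¬ t p.1 p.2 := by
  constructor
  · intro htn
    by_contra h
    push_neg at h
    apply htn
    rw [nabla_iff]
    intro a b
    have hg : A.conGen X a b := by rw [hX]; trivial
    exact hg t ht h
  · rintro ⟨p, _, hnp⟩ h
    rw [h] at hnp
    exact hnp trivial

theorem chain_bound {α : Type} {c : Set (Set α)} (hc : IsChain (· ⊆ ·) c)
    (hcne : c.Nonempty) {ι : Type} [Finite ι] (f : ι → α)
    (h : ∀ i, ∃ s ∈ c, f i ∈ s) : ∃ s ∈ c, ∀ i, f i ∈ s := by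
  choose g hg1 hg2 using h
  rcases isEmpty_or_nonempty ι with hι | hι
  · obtain ⟨s, hs⟩ := hcne
    exact ⟨s, hs, fun i => (hι.false i).elim⟩
  · have hfin : (Set.range g).Finite := Set.finite_range g
    obtain ⟨s0, hs0mem, hs0max⟩ :=
      Set.Finite.exists_maximalFor id (Set.range g) hfin (Set.range_nonempty g)
    obtain ⟨j, hj⟩ := hs0mem
    refine ⟨s0, hj ▸ hg1 j, fun i => ?_⟩
    rcases eq_or_ne (g i) s0 with he | hne'
    · exact he ▸ hg2 i
    · rcases hc (hg1 i) (hj ▸ hg1 j) hne' with hsub | hsub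
      · exact hsub (hg2 i)
      · have : s0 = g i := le_antisymm hsub (hs0max ⟨i, rfl⟩ hsub)
        exact this ▸ hg2 i

/-- Every proper congruence lies below some maximal congruence (uses that
`∇` is finitely generated, via Zorn's lemma). -/
theorem exists_max_above
    (hfg : ∃ X : Set (A.carrier × A.carrier), X.Finite ∧ A.conGen X = A.nabla)
    {r : A.carrier → A.carrier → Prop} (hr : A.IsCon r) (hrn : r ≠ A.nabla) :
    ∃ m, A.IsMaxCon m ∧ ∀ a b, r a b → m a b := by
  obtain ⟨X, hXfin, hXgen⟩ := hfg
  set S : Set (Set (A.carrier × A.carrier)) :=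
    {s | A.IsCon (fun a b => (a, b) ∈ s) ∧ (∃ p ∈ X, p ∉ s) ∧
      ∀ a b, r a b → (a, b) ∈ s} with hS
  have hchain : ∀ c ⊆ S, IsChain (· ⊆ ·) c → c.Nonempty →
      ∃ ub ∈ S, ∀ s ∈ c, s ⊆ ub := by
    intro c hcS hc hcne
    obtain ⟨s1, hs1⟩ := hcne
    refine ⟨⋃₀ c, ⟨⟨⟨?_, ?_, ?_⟩, ?_⟩, ?_, ?_⟩, fun s hs => Set.subset_sUnion_of_mem hs⟩
    · intro a
      exact ⟨s1, hs1, (hcS hs1).1.1.refl a⟩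
    · rintro a b ⟨s, hs, hab⟩
      exact ⟨s, hs, (hcS hs).1.1.symm hab⟩
    · rintro a b d ⟨s, hs, hab⟩ ⟨s', hs', hbd⟩
      rcases eq_or_ne s s' with he | hne'
      · exact ⟨s, hs, (hcS hs).1.1.trans hab (he ▸ hbd)⟩
      · rcases hc hs hs' hne' with hsub | hsub
        · exact ⟨s', hs', (hcS hs').1.1.trans (hsub hab) hbd⟩
        · exact ⟨s, hs, (hcS hs).1.1.trans hab (hsub hbd)⟩
    · intro f x y h
      obtain ⟨s, hs, hall⟩ := chain_bound hc ⟨s1, hs1⟩ (fun i => (x i, y i)) h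
      exact ⟨s, hs, (hcS hs).1.2 f x y hall⟩
    · by_contra hcov
      push_neg at hcov
      have hall0 : ∀ p : X, ∃ s ∈ c, (p : A.carrier × A.carrier) ∈ s := by
        intro p
        exact hcov p.1 p.2
      have : ∃ s ∈ c, ∀ p : X, (p : A.carrier × A.carrier) ∈ s := by
        haveI := hXfin.to_subtype
        exact chain_bound hc ⟨s1, hs1⟩ _ hall0
      obtain ⟨s, hs, hall⟩ := this
      obtain ⟨p, hpX, hps⟩ := (hcS hs).2.1
      exact hps (hall ⟨p, hpX⟩)
    · intro a b hab
      exact ⟨s1, hs1, (hcS hs1).2.2 a b hab⟩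
  have hxS : {p | r p.1 p.2} ∈ S := by
    refine ⟨hr, ?_, fun a b h => h⟩
    exact (proper_iff hXgen hr).mp hrn
  obtain ⟨m, hxm, hm⟩ := zorn_subset_nonempty S hchain _ hxS
  refine ⟨fun a b => (a, b) ∈ m, ⟨hm.1.1, ?_, ?_⟩, fun a b h => hxm h⟩
  · rw [proper_iff hXgen hm.1.1]
    obtain ⟨p, hpX, hpm⟩ := hm.1.2.1
    exact ⟨p, hpX, fun h => hpm h⟩
  · intro ψ hψc hψn hsub
    have hsψ : {p | ψ p.1 p.2} ∈ S := by
      refine ⟨hψc, (proper_iff hXgen hψc).mp hψn, fun a b h => hsub a b (hxm h)⟩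
    have hms : m ⊆ {p | ψ p.1 p.2} := fun p hp => hsub p.1 p.2 hp
    have hsm := hm.2 hsψ hms
    funext a b
    exact propext ⟨fun h => hsm h, fun h => hsub a b h⟩

theorem interp_mk {θ : A.carrier → A.carrier → Prop} (hθ : A.IsCon θ)
    (f : σ.ops) (x : Fin (σ.arity f) → A.carrier) :
    (A.quotAlg θ).interp f (fun i => Quot.mk θ (x i)) = Quot.mk θ (A.interp f x) := by
  show Quot.mk θ (A.interp f fun i => (Quot.mk θ (x i)).out) = Quot.mk θ (A.interp f x)
  exact Quot.sound (hθ.2 f _ _ fun i => (mk_eq hθ).mp ((Quot.mk θ (x i)).out_eq))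

theorem pull_con {θ γ : _} (hθ : A.IsCon θ) (hγ : (A.quotAlg θ).IsCon γ) :
    A.IsCon (fun a b => γ (Quot.mk θ a) (Quot.mk θ b)) := by
  refine ⟨⟨fun a => hγ.1.refl _, fun h => hγ.1.symm h, fun h1 h2 => hγ.1.trans h1 h2⟩, ?_⟩
  intro f x y h
  have := hγ.2 f (fun i => Quot.mk θ (x i)) (fun i => Quot.mk θ (y i)) h
  rwa [interp_mk hθ f x, interp_mk hθ f y] at this

theorem push_con {θ t : A.carrier → A.carrier → Prop} (hθ : A.IsCon θ)
    (ht : A.IsCon t) (hsub : ∀ a b, θ a b → t a b) :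
    (A.quotAlg θ).IsCon (A.quotRel θ t) := by
  refine ⟨⟨?_, ?_, ?_⟩, ?_⟩
  · intro x
    obtain ⟨a, ha⟩ := Quot.exists_rep x
    exact ⟨a, a, ha.symm, ha.symm, ht.1.refl a⟩
  · rintro x y ⟨a, b, hx, hy, hab⟩
    exact ⟨b, a, hy, hx, ht.1.symm hab⟩
  · rintro x y z ⟨a, b, hx, hy, hab⟩ ⟨b', d, hy', hz, hbd⟩
    have hbb : θ b b' := (mk_eq hθ).mp (hy ▸ hy' ▸ rfl)
    exact ⟨a, d, hx, hz, ht.1.trans hab (ht.1.trans (hsub _ _ hbb) hbd)⟩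
  · intro f x y h
    refine ⟨A.interp f (fun i => (x i).out), A.interp f (fun i => (y i).out),
      rfl, rfl, ?_⟩
    apply ht.2
    intro i
    obtain ⟨a, b, hxa, hyb, hab⟩ := h i
    have h1 : t (x i).out a :=
      hsub _ _ ((mk_eq hθ).mp (by rw [(x i).out_eq]; exact hxa))
    have h2 : t b (y i).out :=
      hsub _ _ ((mk_eq hθ).mp (by rw [(y i).out_eq]; exact hyb.symm))
    exact ht.1.trans h1 (ht.1.trans hab h2)

/-- In a local algebra with `∇` finitely generated, every Boolean congruence of
any quotient is trivial. -/
theorem boolean_dichotomy (hloc : ∃! μ, A.IsMaxCon μ)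
    (hfg : ∃ X : Set (A.carrier × A.carrier), X.Finite ∧ A.conGen X = A.nabla)
    {θ : A.carrier → A.carrier → Prop} (hθ : A.IsCon θ)
    {γ : Quot θ → Quot θ → Prop} (hγ : (A.quotAlg θ).IsBooleanCon γ) :
    γ = (A.quotAlg θ).nabla ∨ γ = (A.quotAlg θ).delta := by
  obtain ⟨hγc, ψ, hψc, hjoin, hmeet⟩ := hγ
  set pγ : A.carrier → A.carrier → Prop :=
    fun a b => γ (Quot.mk θ a) (Quot.mk θ b) with hpγdef
  set pψ : A.carrier → A.carrier → Prop :=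
    fun a b => ψ (Quot.mk θ a) (Quot.mk θ b) with hpψdef
  have hpγc : A.IsCon pγ := pull_con hθ hγc
  have hpψc : A.IsCon pψ := pull_con hθ hψc
  have hθγ : ∀ a b, θ a b → pγ a b := by
    intro a b h
    show γ (Quot.mk θ a) (Quot.mk θ b)
    rw [Quot.sound h]
    exact hγc.1.refl _
  -- the join of the pullbacks is total
  have hJ : ∀ t, A.IsCon t → (∀ a b, pγ a b → t a b) → (∀ a b, pψ a b → t a b) →
      ∀ a b, t a b := by
    intro t ht h1 h2 a b
    have hθt : ∀ a b, θ a b → t a b := fun a b h => h1 a b (hθγ a b h)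
    have hqt : (A.quotAlg θ).IsCon (A.quotRel θ t) := push_con hθ ht hθt
    have hγqt : ∀ x y, γ x y → A.quotRel θ t x y := by
      intro x y hxy
      obtain ⟨a', ha⟩ := Quot.exists_rep x
      obtain ⟨b', hb⟩ := Quot.exists_rep y
      refine ⟨a', b', ha.symm, hb.symm, h1 a' b' ?_⟩
      show γ (Quot.mk θ a') (Quot.mk θ b')
      rw [ha, hb]; exact hxy
    have hψqt : ∀ x y, ψ x y → A.quotRel θ t x y := by
      intro x y hxy
      obtain ⟨a', ha⟩ := Quot.exists_rep x
      obtain ⟨b', hb⟩ := Quot.exists_rep y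
      refine ⟨a', b', ha.symm, hb.symm, h2 a' b' ?_⟩
      show ψ (Quot.mk θ a') (Quot.mk θ b')
      rw [ha, hb]; exact hxy
    have hjab : (A.quotAlg θ).conJoin γ ψ (Quot.mk θ a) (Quot.mk θ b) := by
      rw [hjoin]; trivial
    obtain ⟨a', b', ha', hb', htab⟩ := hjab (A.quotRel θ t) hqt hγqt hψqt
    have h1' : t a a' := hθt a a' ((mk_eq hθ).mp ha')
    have h2' : t b' b := hθt b' b ((mk_eq hθ).mp hb'.symm)
    exact ht.1.trans h1' (ht.1.trans htab h2')
  by_cases hγn : pγ = A.nabla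
  · left
    funext x y
    apply propext
    refine ⟨fun _ => trivial, fun _ => ?_⟩
    obtain ⟨a, ha⟩ := Quot.exists_rep x
    obtain ⟨b, hb⟩ := Quot.exists_rep y
    have : pγ a b := by rw [hγn]; trivial
    rw [← ha, ← hb]
    exact this
  by_cases hψn : pψ = A.nabla
  · right
    funext x y
    apply propext
    constructor
    · intro hxy
      obtain ⟨a, ha⟩ := Quot.exists_rep x
      obtain ⟨b, hb⟩ := Quot.exists_rep y
      have hψxy : ψ x y := by
        have : pψ a b := by rw [hψn]; trivial
        rw [← ha, ← hb]; exact this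
      have : (A.quotAlg θ).conMeet γ ψ x y := ⟨hxy, hψxy⟩
      rw [hmeet] at this
      exact this
    · intro h
      have h' : x = y := h
      rw [h']
      exact hγc.1.refl y
  · exfalso
    obtain ⟨μ, hμ, huniq⟩ := hloc
    obtain ⟨m1, hm1, hsub1⟩ := exists_max_above hfg hpγc hγn
    obtain ⟨m2, hm2, hsub2⟩ := exists_max_above hfg hpψc hψn
    have e1 : m1 = μ := huniq m1 hm1
    have e2 : m2 = μ := huniq m2 hm2
    have : ∀ a b, μ a b :=
      hJ μ hμ.1 (fun a b h => e1 ▸ hsub1 a b h) (fun a b h => e2 ▸ hsub2 a b h)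
    exact hμ.2.1 (nabla_iff.mpr this)

theorem join_nabla (θ : A.carrier → A.carrier → Prop) :
    A.conJoin A.nabla θ = A.nabla :=
  nabla_iff.mpr fun a b t _ h1 _ => h1 a b trivial

theorem quotRel_nabla (θ : A.carrier → A.carrier → Prop) :
    A.quotRel θ A.nabla = (A.quotAlg θ).nabla := by
  funext x y
  apply propext
  refine ⟨fun _ => trivial, fun _ => ?_⟩
  obtain ⟨a, ha⟩ := Quot.exists_rep x
  obtain ⟨b, hb⟩ := Quot.exists_rep y
  exact ⟨a, b, ha.symm, hb.symm, trivial⟩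

theorem join_delta {θ : A.carrier → A.carrier → Prop} (hθ : A.IsCon θ) :
    A.conJoin A.delta θ = θ := by
  funext a b
  apply propext
  constructor
  · intro h
    exact h θ hθ (fun x y hxy => by rw [show x = y from hxy]; exact hθ.1.refl y)
      (fun _ _ h => h)
  · intro h t _ _ h2
    exact h2 a b h

theorem quotRel_self {θ : A.carrier → A.carrier → Prop} (hθ : A.IsCon θ) :
    A.quotRel θ θ = (A.quotAlg θ).delta := by
  funext x y
  apply propext
  constructor
  · rintro ⟨a, b, rfl, rfl, hab⟩
    exact Quot.sound hab
  · intro h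
    have h' : x = y := h
    obtain ⟨a, ha⟩ := Quot.exists_rep x
    exact ⟨a, a, ha.symm, by rw [← h']; exact ha.symm, hθ.1.refl a⟩

theorem fc_nabla : A.IsFC A.nabla := by
  refine ⟨con_nabla, A.delta, con_delta, ?_, ?_, ?_⟩
  · exact nabla_iff.mpr fun a b t _ h1 _ => h1 a b trivial
  · funext a b
    exact propext ⟨fun h => h.2, fun h => ⟨trivial, h⟩⟩
  · funext a b
    exact propext ⟨fun _ => ⟨b, trivial, show A.delta b b from rfl⟩,
      fun _ => ⟨a, show A.delta a a from rfl, trivial⟩⟩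

theorem fc_delta : A.IsFC A.delta := by
  refine ⟨con_delta, A.nabla, con_nabla, ?_, ?_, ?_⟩
  · exact nabla_iff.mpr fun a b t _ _ h2 => h2 a b trivial
  · funext a b
    exact propext ⟨fun h => h.1, fun h => ⟨h, trivial⟩⟩
  · funext a b
    exact propext ⟨fun _ => ⟨a, show A.delta a a from rfl, trivial⟩,
      fun _ => ⟨b, trivial, show A.delta b b from rfl⟩⟩

end Alg

/-- A local congruence-distributive algebra in which `∇` is a finitely
generated congruence has the FCLP and the CBLP. -/
theorem stmt_17 {σ : Signature} (A : Alg σ) (hne : Nonempty A.carrier)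
    (hcd : A.CongDistrib) (hloc : ∃! μ, A.IsMaxCon μ)
    (hfg : ∃ X : Set (A.carrier × A.carrier), X.Finite ∧ A.conGen X = A.nabla) :
    A.AlgFCLP ∧ A.AlgCBLP := by
  have main : ∀ θ, A.IsCon θ → ∀ γ, (A.quotAlg θ).IsBooleanCon γ →
      ∃ ψ, A.IsFC ψ ∧ A.quotRel θ (A.conJoin ψ θ) = γ := by
    intro θ hθ γ hγ
    rcases Alg.boolean_dichotomy hloc hfg hθ hγ with h | h
    · exact ⟨A.nabla, Alg.fc_nabla, by rw [Alg.join_nabla, Alg.quotRel_nabla, h]⟩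
    · exact ⟨A.delta, Alg.fc_delta, by rw [Alg.join_delta hθ, Alg.quotRel_self hθ, h]⟩
  constructor
  · intro θ hθ γ hγ
    exact main θ hθ γ ⟨hγ.1, hγ.2.choose, hγ.2.choose_spec.1, hγ.2.choose_spec.2.1,
      hγ.2.choose_spec.2.2.1⟩
  · intro θ hθ γ hγ
    obtain ⟨ψ, hψ, hq⟩ := main θ hθ γ hγ
    exact ⟨ψ, ⟨hψ.1, hψ.2.choose, hψ.2.choose_spec.1, hψ.2.choose_spec.2.1,
      hψ.2.choose_spec.2.2.1⟩, hq⟩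
end
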